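/- Every prefix of the word s_m of length k contains at most ⌈log₂(k+1)⌉ distinct letters. -/

import Mathlib

def sWord : ℕ → List ℕ
  | 0 => []
  | i + 1 => sWord i ++ [i + 1] ++ sWord i

lemma sWord_length (m : ℕ) : (sWord m).length = 2 ^ m - 1 := by
  induction m with
  | zero => simp [sWord]
  | succ n ih =>
    have h : 1 ≤ 2 ^ n := Nat.one_le_two_pow
    simp [sWord, ih, List.length_append, pow_succ]
    omega

lemma sWord_card (m : ℕ) : (sWord m).toFinset.card ≤ m := by
  induction m with
  | zero => simp [sWord]
  | succ n ih =>
    have : (sWord (n+1)).toFinset ⊆ insert (n+1) (sWord n).toFinset := by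
      intro x hx
      simp only [sWord, List.mem_toFinset, List.mem_append, List.mem_singleton] at hx
      simp only [Finset.mem_insert, List.mem_toFinset]
      tauto
    calc (sWord (n+1)).toFinset.card ≤ (insert (n+1) (sWord n).toFinset).card :=
          Finset.card_le_card this
      _ ≤ (sWord n).toFinset.card + 1 := Finset.card_insert_le _ _
      _ ≤ n + 1 := by omega

/-- Every prefix of `s m` of length `k` contains at most `⌈log₂(k+1)⌉` distinct letters. -/
theorem sWord_prefix_distinct_letters (m k : ℕ) :
    ((sWord m).take k).toFinset.card ≤ Nat.clog 2 (k + 1) := by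
  induction m generalizing k with
  | zero => simp [sWord]
  | succ n ih =>
    by_cases hk : k ≤ 2 ^ n - 1
    · have hlen : k ≤ (sWord n).length := by rw [sWord_length]; exact hk
      have : (sWord (n+1)).take k = (sWord n).take k := by
        show ((sWord n ++ [n+1]) ++ sWord n).take k = _
        rw [List.take_append_of_le_length (by simp; omega),
          List.take_append_of_le_length hlen]
      rw [this]; exact ih k
    · have h2 : 2 ^ n < k + 1 := by
        have : 1 ≤ 2 ^ n := Nat.one_le_two_pow
        omega
      have hclog : n + 1 ≤ Nat.clog 2 (k + 1) := by
        have := (Nat.lt_clog_iff_pow_lt (b := 2) (by norm_num)).mpr h2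
        omega
      calc ((sWord (n+1)).take k).toFinset.card
          ≤ (sWord (n+1)).toFinset.card :=
            Finset.card_le_card (by
              intro x hx
              simp only [List.mem_toFinset] at hx ⊢
              exact List.mem_of_mem_take hx)
        _ ≤ n + 1 := sWord_card (n+1)
        _ ≤ _ := hclog
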